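/- Consider the N-player game in which each peer i chooses x_i ≥ 0 and receives payoff u_i(x) = f(∑_{j=1}^N x_j) − γ·x_i − δ·∑_{j≠i} x_j (the content production game with enforced full sharing, with y_i = x_i and full downloading substituted in). Then x ∈ ℝ_+^N is a Nash equilibrium (for each i, x_i maximizes u_i over [0,∞) given x_{−i}) if and only if ∑_{j=1}^N x_j = x̃_γ. Moreover, at every Nash equilibrium the sum of the peers' payoffs equals N·(f(x̃_γ) − β·x̃_γ). -/

import Mathlib

open Filter Finset

/-- The benefit function `f` with its first and second derivatives, together with
the maximizer map `α ↦ x̂_α` (the unique `x ≥ 0` with `f'(x̂_α) = α` for `α ∈ (0, f'(0)]`). -/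
structure BenefitFun where
  f : ℝ → ℝ
  f' : ℝ → ℝ
  f'' : ℝ → ℝ
  xhat : ℝ → ℝ
  f_zero : f 0 = 0
  f_nonneg : ∀ x : ℝ, 0 ≤ x → 0 ≤ f x
  hasDeriv : ∀ x ∈ Set.Ici (0:ℝ), HasDerivWithinAt f (f' x) (Set.Ici 0) x
  hasDeriv' : ∀ x ∈ Set.Ici (0:ℝ), HasDerivWithinAt f' (f'' x) (Set.Ici 0) x
  cont_f'' : ContinuousOn f'' (Set.Ici 0)
  f'_pos : ∀ x : ℝ, 0 < x → 0 < f' x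
  f''_neg : ∀ x : ℝ, 0 < x → f'' x < 0
  f'_tendsto : Filter.Tendsto f' Filter.atTop (nhds 0)
  xhat_nonneg : ∀ α : ℝ, 0 < α → α ≤ f' 0 → 0 ≤ xhat α
  xhat_spec : ∀ α : ℝ, 0 < α → α ≤ f' 0 → f' (xhat α) = α
  xhat_unique : ∀ α : ℝ, 0 < α → α ≤ f' 0 → ∀ x : ℝ, 0 ≤ x → f' x = α → x = xhat α
  xhat_max : ∀ α : ℝ, 0 < α → α ≤ f' 0 → ∀ x : ℝ, 0 ≤ x → f x - α * x ≤ f (xhat α) - α * xhat α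

/-- `f*(α) = f(x̂_α) − α·x̂_α = sup_{x ≥ 0} (f(x) − α x)`. -/
noncomputable def BenefitFun.fstar (B : BenefitFun) (α : ℝ) : ℝ :=
  B.f (B.xhat α) - α * B.xhat α

/-- `β̃(n) = (1/n)·κ + ((n−1)/n)·(δ+σ)`. -/
noncomputable def btilde (κ δ σ : ℝ) (n : ℕ) : ℝ :=
  (1 / (n:ℝ)) * κ + (((n:ℝ) - 1) / (n:ℝ)) * (δ + σ)

/-- Peer `i`'s payoff in the content production game with enforced full sharing
(full downloading substituted in): `uᵢ(x) = f(∑ⱼ xⱼ) − γ xᵢ − δ·∑_{j≠i} xⱼ`. -/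
noncomputable def payoffFS (B : BenefitFun) (γ δ : ℝ) {N : ℕ}
    (x : Fin N → ℝ) (i : Fin N) : ℝ :=
  B.f (∑ j, x j) - γ * x i - δ * (∑ j ∈ Finset.univ.erase i, x j)

theorem stmt13 (B : BenefitFun) (N : ℕ) (hN : 2 ≤ N)
    (κ δ σ : ℝ) (hκ : 0 < κ) (hδ : 0 < δ) (hσ : 0 < σ)
    (hcost : δ + σ < κ) (hκf : κ < B.f' 0)
    (β : ℝ) (hβ : β = (1 / (N:ℝ)) * κ + (((N:ℝ) - 1) / (N:ℝ)) * (δ + σ))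
    (γ : ℝ) (hγ : γ = κ + ((N:ℝ) - 1) * σ)
    (xt : ℝ) (hxt : xt = if γ ≤ B.f' 0 then B.xhat γ else 0) :
    (∀ x : Fin N → ℝ, (∀ j, 0 ≤ x j) →
      ((∀ i : Fin N, ∀ x' : ℝ, 0 ≤ x' →
          payoffFS B γ δ (Function.update x i x') i ≤ payoffFS B γ δ x i)
        ↔ (∑ j, x j) = xt))
    ∧ (∀ x : Fin N → ℝ, (∀ j, 0 ≤ x j) →
        (∀ i : Fin N, ∀ x' : ℝ, 0 ≤ x' →
          payoffFS B γ δ (Function.update x i x') i ≤ payoffFS B γ δ x i) →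
        (∑ i, payoffFS B γ δ x i) = (N:ℝ) * (B.f xt - β * xt)) := by

  have hN2 : (2:ℝ) ≤ (N:ℝ) := by exact_mod_cast hN
  have hNR : (0:ℝ) < (N:ℝ) := by linarith
  have hγpos : 0 < γ := by rw [hγ]; nlinarith
  have hxt0 : 0 ≤ xt := by
    rw [hxt]; split_ifs with hle
    · exact B.xhat_nonneg γ hγpos hle
    · exact le_refl 0
  have hcontf : ContinuousOn B.f (Set.Ici 0) := fun x hx => (B.hasDeriv x hx).continuousWithinAt
  have hcontf' : ContinuousOn B.f' (Set.Ici 0) := fun x hx => (B.hasDeriv' x hx).continuousWithinAt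
  have hf'anti : StrictAntiOn B.f' (Set.Ici 0) := by
    apply strictAntiOn_of_deriv_neg (convex_Ici 0) hcontf'
    intro x hx
    rw [interior_Ici] at hx
    have hd : HasDerivAt B.f' (B.f'' x) x :=
      (B.hasDeriv' x (Set.mem_Ici.mpr (Set.mem_Ioi.mp hx).le)).hasDerivAt (Ici_mem_nhds hx)
    rw [hd.deriv]; exact B.f''_neg x hx
  have key1 : ∀ x : ℝ, xt < x → B.f' x < γ := by
    intro x hx
    have hx0 : (0:ℝ) < x := lt_of_le_of_lt hxt0 hx
    by_cases hle : γ ≤ B.f' 0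
    · have hxtv : xt = B.xhat γ := by rw [hxt, if_pos hle]
      have h1 := hf'anti (Set.mem_Ici.mpr hxt0) (Set.mem_Ici.mpr hx0.le) hx
      rw [hxtv, B.xhat_spec γ hγpos hle] at h1
      exact h1
    · have h1 := hf'anti (Set.mem_Ici.mpr (le_refl 0)) (Set.mem_Ici.mpr hx0.le) hx0
      linarith [not_le.mp hle]
  have key2 : ∀ x : ℝ, 0 ≤ x → x < xt → γ < B.f' x := by
    intro x hx0 hx
    have hle : γ ≤ B.f' 0 := by
      by_contra hc; rw [hxt, if_neg hc] at hx; linarith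
    have hxtv : xt = B.xhat γ := by rw [hxt, if_pos hle]
    have h1 := hf'anti (Set.mem_Ici.mpr hx0) (Set.mem_Ici.mpr hxt0) hx
    rw [hxtv, B.xhat_spec γ hγpos hle] at h1
    exact h1
  set g : ℝ → ℝ := fun y => B.f y - γ * y with hg
  have hderivg : ∀ x : ℝ, 0 < x → HasDerivAt g (B.f' x - γ) x := by
    intro x hx
    have hd : HasDerivAt B.f (B.f' x) x := (B.hasDeriv x hx.le).hasDerivAt (Ici_mem_nhds hx)
    have h3 := hd.sub ((hasDerivAt_id x).const_mul γ)
    rw [mul_one] at h3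
    exact h3
  have hcontg : ContinuousOn g (Set.Ici 0) := by
    rw [hg]; exact hcontf.sub ((continuous_const.mul continuous_id).continuousOn)
  have hganti : StrictAntiOn g (Set.Ici xt) := by
    apply strictAntiOn_of_deriv_neg (convex_Ici xt) (hcontg.mono (Set.Ici_subset_Ici.mpr hxt0))
    intro x hx
    rw [interior_Ici] at hx
    rw [(hderivg x (lt_of_le_of_lt hxt0 hx)).deriv]
    linarith [key1 x hx]
  have hgmono : StrictMonoOn g (Set.Icc 0 xt) := by
    apply strictMonoOn_of_deriv_pos (convex_Icc 0 xt) (hcontg.mono Set.Icc_subset_Ici_self)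
    intro x hx
    rw [interior_Icc] at hx
    rw [(hderivg x hx.1).deriv]
    linarith [key2 x hx.1.le hx.2]
  have hgmax : ∀ x : ℝ, 0 ≤ x → g x ≤ g xt := by
    intro x hx
    rcases le_total x xt with hc | hc
    · rcases eq_or_lt_of_le hc with heq | hlt
      · rw [heq]
      · exact (hgmono ⟨hx, hc⟩ ⟨hxt0, le_refl xt⟩ hlt).le
    · rcases eq_or_lt_of_le hc with heq | hlt
      · rw [heq]
      · exact (hganti (Set.self_mem_Ici) (Set.mem_Ici.mpr hc) hlt).le
  have hpay : ∀ (x : Fin N → ℝ) (i : Fin N) (x' : ℝ),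
      payoffFS B γ δ (Function.update x i x') i
        = B.f ((∑ j ∈ Finset.univ.erase i, x j) + x') - γ * x'
            - δ * (∑ j ∈ Finset.univ.erase i, x j) := by
    intro x i x'
    have h1 : ∑ j, Function.update x i x' j = (∑ j ∈ Finset.univ.erase i, x j) + x' := by
      rw [Finset.sum_update_of_mem (Finset.mem_univ i), add_comm]
      congr 1
      simp [Finset.sdiff_singleton_eq_erase]
    have h2 : ∑ j ∈ Finset.univ.erase i, Function.update x i x' j
        = ∑ j ∈ Finset.univ.erase i, x j :=
      Finset.sum_congr rfl fun j hj => Function.update_of_ne (Finset.ne_of_mem_erase hj) _ _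
    simp only [payoffFS, h1, h2, Function.update_self]
  have part1 : ∀ x : Fin N → ℝ, (∀ j, 0 ≤ x j) →
      ((∀ i : Fin N, ∀ x' : ℝ, 0 ≤ x' →
          payoffFS B γ δ (Function.update x i x') i ≤ payoffFS B γ δ x i)
        ↔ (∑ j, x j) = xt) := by
    intro x hx
    have hS0 : 0 ≤ ∑ j, x j := Finset.sum_nonneg fun j _ => hx j
    have hsplit : ∀ i : Fin N, (∑ j ∈ Finset.univ.erase i, x j) + x i = ∑ j, x j :=
      fun i => Finset.sum_erase_add _ _ (Finset.mem_univ i)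
    have hsnn : ∀ i : Fin N, 0 ≤ ∑ j ∈ Finset.univ.erase i, x j :=
      fun i => Finset.sum_nonneg fun j _ => hx j
    have hiff : (∀ i : Fin N, ∀ x' : ℝ, 0 ≤ x' →
          payoffFS B γ δ (Function.update x i x') i ≤ payoffFS B γ δ x i)
        ↔ (∀ i : Fin N, ∀ x' : ℝ, 0 ≤ x' →
            g ((∑ j ∈ Finset.univ.erase i, x j) + x') ≤ g (∑ j, x j)) := by
      refine forall_congr' fun i => forall_congr' fun x' => imp_congr_right fun _ => ?_
      rw [hpay x i x']
      simp only [payoffFS, hg]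
      rw [← hsplit i]
      constructor <;> intro hh <;> nlinarith [hh]
    rw [hiff]
    constructor
    · intro hnash
      by_contra hne
      rcases lt_or_gt_of_ne hne with hlt | hgt
      · have i : Fin N := ⟨0, by omega⟩
        have hsle : (∑ j ∈ Finset.univ.erase i, x j) ≤ ∑ j, x j := by
          linarith [hx i, hsplit i]
        have h1 := hnash i (xt - ∑ j ∈ Finset.univ.erase i, x j) (by linarith)
        rw [show (∑ j ∈ Finset.univ.erase i, x j)
            + (xt - ∑ j ∈ Finset.univ.erase i, x j) = xt from by ring] at h1
        have h2 : g (∑ j, x j) < g xt :=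
          hgmono ⟨hS0, hlt.le⟩ ⟨hxt0, le_refl xt⟩ hlt
        linarith
      · have hxpos : ∃ i, 0 < x i := by
          by_contra hc; push_neg at hc
          have hz : (∑ j, x j) = 0 :=
            Finset.sum_eq_zero fun i _ => le_antisymm (hc i) (hx i)
          rw [hz] at hgt; linarith
        obtain ⟨i, hi⟩ := hxpos
        have hsS : (∑ j ∈ Finset.univ.erase i, x j) < ∑ j, x j := by
          linarith [hsplit i]
        have hmax_lt : max (∑ j ∈ Finset.univ.erase i, x j) xt < ∑ j, x j := max_lt hsS hgt
        have h1 := hnash i (max (∑ j ∈ Finset.univ.erase i, x j) xt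
            - ∑ j ∈ Finset.univ.erase i, x j) (by simp [le_max_left])
        rw [show (∑ j ∈ Finset.univ.erase i, x j)
            + (max (∑ j ∈ Finset.univ.erase i, x j) xt - ∑ j ∈ Finset.univ.erase i, x j)
            = max (∑ j ∈ Finset.univ.erase i, x j) xt from by ring] at h1
        have h2 : g (∑ j, x j) < g (max (∑ j ∈ Finset.univ.erase i, x j) xt) :=
          hganti (Set.mem_Ici.mpr (le_max_right _ _)) (Set.mem_Ici.mpr (le_trans (le_max_right _ _) hmax_lt.le)) hmax_lt
        linarith
    · intro hS i x' hx'
      rw [hS]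
      exact hgmax _ (add_nonneg (hsnn i) hx')
  refine ⟨part1, ?_⟩
  intro x hx hnash
  have hS := (part1 x hx).mp hnash
  have hsplit : ∀ i : Fin N, (∑ j ∈ Finset.univ.erase i, x j) + x i = ∑ j, x j :=
    fun i => Finset.sum_erase_add _ _ (Finset.mem_univ i)
  have hrw : ∑ i, payoffFS B γ δ x i
      = ∑ i : Fin N, (B.f (∑ j, x j) - γ * x i - δ * ((∑ j, x j) - x i)) := by
    refine Finset.sum_congr rfl fun i _ => ?_
    simp only [payoffFS]
    rw [eq_sub_of_add_eq (hsplit i)]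
  rw [hrw]
  have hsum : ∑ i : Fin N, (B.f (∑ j, x j) - γ * x i - δ * ((∑ j, x j) - x i))
      = (N:ℝ) * B.f (∑ j, x j) - γ * (∑ j, x j)
        - δ * ((N:ℝ) * (∑ j, x j) - (∑ j, x j)) := by
    rw [Finset.sum_sub_distrib, Finset.sum_sub_distrib, ← Finset.mul_sum, ← Finset.mul_sum,
      Finset.sum_sub_distrib, Finset.sum_const, Finset.sum_const, Finset.card_univ,
      Fintype.card_fin, nsmul_eq_mul, nsmul_eq_mul]
  rw [hsum, hS, hβ, hγ]
  have hNne : (N:ℝ) ≠ 0 := ne_of_gt hNR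
  field_simp
  ring
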